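/- Let E be a real inner product space, let f, g ∈ E be linearly independent, and let α ∈ (0, π) be the angle between f and g. For t ∈ [0, 1] write q_t = t·f + (1−t)·g, and let θ(t) denote the angle between g and q_t. Then for every t ∈ (0, 1), the function θ is differentiable at t with derivative θ′(t) = sin α · ‖f‖·‖g‖ / ‖q_t‖². -/

import Mathlib

/-- Claim `speed` in Proposition `prop:a-ALH`: with `q_t = t•f + (1−t)•g` for linearly
independent `f, g` in a real inner product space, and `θ(t)` the angle between `g` and `q_t`,
for every `t ∈ (0,1)` the function `θ` has derivative
`θ′(t) = sin α · ‖f‖ ‖g‖ / ‖q_t‖²` at `t`, where `α` is the angle between `f` and `g`. -/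
theorem hasDerivAt_angle_combination (E : Type*) [NormedAddCommGroup E]
    [InnerProductSpace ℝ E] (f g : E) (hli : LinearIndependent ℝ ![f, g])
    (t : ℝ) (ht0 : 0 < t) (ht1 : t < 1) :
    let α : ℝ := Real.arccos ((inner ℝ f g : ℝ) / (‖f‖ * ‖g‖))
    let q : ℝ → E := fun u => u • f + (1 - u) • g
    HasDerivAt (fun u => Real.arccos ((inner ℝ g (q u) : ℝ) / (‖g‖ * ‖q u‖)))
      (Real.sin α * (‖f‖ * ‖g‖) / ‖q t‖ ^ 2) t := by
  intro α q
  obtain ⟨hg0, hr⟩ := linearIndependent_fin2.mp hli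
  simp only [Matrix.cons_val_one, Matrix.head_cons, Matrix.cons_val_zero] at hg0 hr
  set F := ‖f‖ with hFdef
  set G := ‖g‖ with hGdef
  set a : ℝ := (inner ℝ f g : ℝ) with hadef
  have hf0 : f ≠ 0 := by
    intro h
    exact hr 0 (by simp [h])
  have hFpos : 0 < F := norm_pos_iff.mpr hf0
  have hGpos : 0 < G := norm_pos_iff.mpr hg0
  -- strict Cauchy–Schwarz
  have hCS : |a| < F * G := by
    rcases lt_or_eq_of_le (abs_real_inner_le_norm f g) with h | h
    · exact h
    · exfalso
      have hcomm : (inner ℝ g f : ℝ) = a := by rw [hadef]; exact real_inner_comm f g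
      have h' : ‖(inner ℝ g f : ℝ)‖ = ‖g‖ * ‖f‖ := by
        rw [Real.norm_eq_abs, hcomm, h, ← hFdef, ← hGdef]; ring
      obtain ⟨r, _, hrf⟩ := (norm_inner_eq_norm_iff (𝕜 := ℝ) hg0 hf0).mp h'
      exact hr r hrf.symm
  set K : ℝ := Real.sqrt (F ^ 2 * G ^ 2 - a ^ 2) with hKdef
  have hFG2 : a ^ 2 < F ^ 2 * G ^ 2 := by
    nlinarith [abs_nonneg a, sq_abs a, hCS, mul_pos hFpos hGpos]
  have hK2 : K ^ 2 = F ^ 2 * G ^ 2 - a ^ 2 := Real.sq_sqrt (by nlinarith)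
  have hKpos : 0 < K := Real.sqrt_pos.mpr (by nlinarith)
  set P : ℝ → ℝ := fun u => u ^ 2 * F ^ 2 + 2 * u * (1 - u) * a + (1 - u) ^ 2 * G ^ 2
    with hPdef
  have hPinner : ∀ u : ℝ, (inner ℝ (q u) (q u) : ℝ) = P u := by
    intro u
    show (inner ℝ (u • f + (1 - u) • g) (u • f + (1 - u) • g) : ℝ) = _
    rw [real_inner_add_add_self]
    simp only [real_inner_smul_left, real_inner_smul_right]
    simp only [hPdef, real_inner_self_eq_norm_sq, ← hadef, ← hFdef, ← hGdef]
    ring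
  have hPnorm : ∀ u : ℝ, P u = ‖q u‖ ^ 2 := by
    intro u
    rw [← hPinner u, real_inner_self_eq_norm_sq]
  have hPq : ∀ u : ℝ, ‖q u‖ = Real.sqrt (P u) := by
    intro u
    rw [hPnorm u, Real.sqrt_sq (norm_nonneg _)]
  have hqt0 : q t ≠ 0 := by
    intro h
    apply hr (-(t⁻¹ * (1 - t)))
    have h2 : t • f = -((1 - t) • g) := by
      rw [eq_neg_iff_add_eq_zero]; exact h
    have h3 : f = (t⁻¹ * (1 - t)) • (-g) := by
      have := congrArg (fun x => t⁻¹ • x) h2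
      simpa [smul_smul, inv_mul_cancel₀ ht0.ne', smul_neg, mul_comm] using this
    rw [h3]; simp [smul_neg, neg_smul]
  have hPt : 0 < P t := by
    rw [hPnorm t]
    exact pow_pos (norm_pos_iff.mpr hqt0) 2
  set s : ℝ := Real.sqrt (P t) with hsdef
  have hs2 : s ^ 2 = P t := Real.sq_sqrt hPt.le
  have hspos : 0 < s := Real.sqrt_pos.mpr hPt
  set N : ℝ → ℝ := fun u => u * a + (1 - u) * G ^ 2 with hNdef
  have hNq : ∀ u : ℝ, (inner ℝ g (q u) : ℝ) = N u := by
    intro u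
    have hcomm : (inner ℝ g f : ℝ) = a := by rw [hadef]; exact real_inner_comm f g
    simp only [hNdef, q, inner_add_right, real_inner_smul_right,
      real_inner_self_eq_norm_sq, ← hGdef, hcomm]
  -- rewrite the function
  have hfeq : (fun u => Real.arccos ((inner ℝ g (q u) : ℝ) / (‖g‖ * ‖q u‖)))
      = fun u => Real.arccos (N u / (G * Real.sqrt (P u))) := by
    funext u
    rw [hNq u, hPq u]
  rw [hfeq]
  -- derivatives of the building blocks
  have hid := hasDerivAt_id t
  have hone : HasDerivAt (fun u : ℝ => 1 - u) (-1) t := by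
    exact ((hasDerivAt_const t (1 : ℝ)).sub hid).congr_deriv (by ring)
  have hN' : HasDerivAt N (a - G ^ 2) t := by
    have h := (hid.mul_const a).add (hone.mul_const (G ^ 2))
    refine h.congr_deriv ?_
    ring
  set p' : ℝ := 2 * t * F ^ 2 + (2 - 4 * t) * a + (2 * t - 2) * G ^ 2 with hp'def
  have hP' : HasDerivAt P p' t := by
    have h1 : HasDerivAt (fun u : ℝ => u ^ 2 * F ^ 2) (2 * t * F ^ 2) t := by
      have := (hasDerivAt_pow 2 t).mul_const (F ^ 2)
      refine this.congr_deriv ?_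
      push_cast; ring
    have h2 : HasDerivAt (fun u : ℝ => 2 * u * (1 - u) * a) ((2 - 4 * t) * a) t := by
      have := ((hid.const_mul 2).mul hone).mul_const a
      simp only [id_eq] at this
      refine this.congr_deriv ?_
      ring
    have h3 : HasDerivAt (fun u : ℝ => (1 - u) ^ 2 * G ^ 2) ((2 * t - 2) * G ^ 2) t := by
      have := (hone.pow 2).mul_const (G ^ 2)
      refine this.congr_deriv ?_ <;> push_cast <;> ring
    have := (h1.add h2).add h3
    refine this.congr_deriv ?_ <;> ring
  have hsqrtP : HasDerivAt (fun u => Real.sqrt (P u)) (p' / (2 * s)) t := by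
    have := (Real.hasDerivAt_sqrt hPt.ne').comp t hP'
    refine this.congr_deriv ?_
    rw [← hsdef]; ring
  have hD : HasDerivAt (fun u => G * Real.sqrt (P u)) (G * (p' / (2 * s))) t :=
    hsqrtP.const_mul G
  have hDt : G * Real.sqrt (P t) ≠ 0 := by
    rw [← hsdef]; positivity
  have hc : HasDerivAt (fun u => N u / (G * Real.sqrt (P u)))
      (((a - G ^ 2) * (G * s) - N t * (G * (p' / (2 * s)))) / (G * s) ^ 2) t := by
    have := hN'.div hD hDt
    rw [← hsdef] at this
    exact this
  -- key quantity bounds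
  have hGP : G ^ 2 * P t - (N t) ^ 2 = t ^ 2 * (F ^ 2 * G ^ 2 - a ^ 2) := by
    simp only [hNdef, hPdef]; ring
  have habs : |N t / (G * s)| < 1 := by
    rw [abs_div, abs_of_pos (by positivity : (0:ℝ) < G * s), div_lt_one (by positivity)]
    have h2 : |N t| ^ 2 < (G * s) ^ 2 := by
      rw [sq_abs]
      nlinarith [hs2, hGP, mul_pos (mul_pos ht0 ht0) (sub_pos.mpr hFG2)]
    exact lt_of_pow_lt_pow_left₀ 2 (by positivity) h2
  obtain ⟨hlb, hub⟩ := abs_lt.mp habs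
  have harccos := (Real.hasDerivAt_arccos (ne_of_gt hlb) (ne_of_lt hub)).comp t hc
  -- simplify √(1 - c t ^ 2)
  have hsq : Real.sqrt (1 - (N t / (G * s)) ^ 2) = t * K / (G * s) := by
    have h1 : 1 - (N t / (G * s)) ^ 2 = (t * K / (G * s)) ^ 2 := by
      field_simp
      linear_combination G ^ 2 * hs2 - t ^ 2 * hK2 + hGP
    rw [h1, Real.sqrt_sq (by positivity)]
  -- simplify sin α
  have hsin : Real.sin α = K / (F * G) := by
    show Real.sin (Real.arccos (a / (F * G))) = K / (F * G)
    rw [Real.sin_arccos]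
    have h1 : 1 - (a / (F * G)) ^ 2 = (K / (F * G)) ^ 2 := by
      field_simp
      linear_combination -hK2
    rw [h1, Real.sqrt_sq (by positivity)]
  -- value of c'
  have hcval : ((a - G ^ 2) * (G * s) - N t * (G * (p' / (2 * s)))) / (G * s) ^ 2
      = -(t * K ^ 2) / (G * s ^ 3) := by
    have key : 2 * (P t) * (a - G ^ 2) - N t * p' = -2 * t * K ^ 2 := by
      rw [hK2]; simp only [hNdef, hPdef, hp'def]; ring
    rw [← hs2] at key
    field_simp
    linear_combination key
  refine harccos.congr_deriv ?_
  rw [hsq, hcval, hsin, ← hPnorm t, ← hs2]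
  have hsne : s ≠ 0 := hspos.ne'
  have hKne : K ≠ 0 := hKpos.ne'
  field_simp
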